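/- Let Γ be a discrete purely hyperbolic subgroup of SL(2,ℝ) and let a, b be non-identity elements of Γ with a·b = b·a. Then there exist an element c ∈ Γ and integers m, n such that a = c^m and b = c^n. -/

import Mathlib

open scoped MatrixGroups LinearAlgebra.Projectivization UpperHalfPlane Pointwise
open Matrix

noncomputable section

/-- The topology on `SL(2, ℝ)` as a subspace of the space of `2 × 2` real matrices. -/
instance : TopologicalSpace SL(2, ℝ) :=
  inferInstanceAs (TopologicalSpace { A : Matrix (Fin 2) (Fin 2) ℝ // A.det = 1 })

/-- The real projective line. -/
abbrev RP1 : Type := ℙ ℝ (Fin 2 → ℝ)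

instance : TopologicalSpace RP1 :=
  inferInstanceAs (TopologicalSpace (Quotient (projectivizationSetoid ℝ (Fin 2 → ℝ))))

/-- The action of `SL(2, ℝ)` on the real projective line, via its linear action on `ℝ²`. -/
def sl2Act (g : SL(2, ℝ)) (p : RP1) : RP1 :=
  Projectivization.map (Matrix.SpecialLinearGroup.toLin' g).toLinearMap
    (Matrix.SpecialLinearGroup.toLin' g).injective p

/-- The point `[x : 1]` of the real projective line. -/
def projPt (x : ℝ) : RP1 :=
  Projectivization.mk ℝ ![x, 1] (by
    intro h
    have := congrFun h 1
    simp at this)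

/-- The point `∞ = [1 : 0]` of the real projective line. -/
def projInf : RP1 :=
  Projectivization.mk ℝ ![1, 0] (by
    intro h
    have := congrFun h 0
    simp at this)

/-- The ray in the upper half-plane associated to a point of `ℝP¹`:
`ray [x:1] = {x + i t : 0 < t ≤ 1}` and `ray ∞ = {i t : t ≥ 1}`. -/
def ray (p : RP1) : Set ℍ :=
  if p.rep 1 = 0 then {z : ℍ | z.re = 0 ∧ 1 ≤ z.im}
  else {z : ℍ | z.re = p.rep 0 / p.rep 1 ∧ z.im ≤ 1}

/-- An element of `SL(2, ℝ)` is hyperbolic if the absolute value of its trace exceeds `2`. -/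
def IsHyperbolic (g : SL(2, ℝ)) : Prop :=
  2 < |Matrix.trace (g : Matrix (Fin 2) (Fin 2) ℝ)|

/-- A subgroup of `SL(2, ℝ)` is purely hyperbolic if all of its non-identity elements
are hyperbolic. -/
def PurelyHyperbolic (Γ : Subgroup SL(2, ℝ)) : Prop :=
  ∀ g ∈ Γ, g ≠ 1 → IsHyperbolic g

/-- A subgroup of `SL(2, ℝ)` is non-elementary if it is not virtually abelian, i.e. it has
no abelian subgroup of finite index. -/
def IsNonElementary (Γ : Subgroup SL(2, ℝ)) : Prop :=
  ¬ ∃ H : Subgroup Γ, H.FiniteIndex ∧ ∀ a ∈ H, ∀ b ∈ H, a * b = b * a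

/-- `p ∈ ℝP¹` is a conical limit point of `Γ'` if some compact subset of `ℍ` has infinitely
many `Γ'`-translates meeting the ray ending at `p`. -/
def IsConicalLimitPoint (Γ' : Subgroup SL(2, ℝ)) (p : RP1) : Prop :=
  ∃ K : Set ℍ, IsCompact K ∧ ∃ γ : ℕ → SL(2, ℝ), Function.Injective γ ∧
    (∀ k, γ k ∈ Γ') ∧ ∀ k, (γ k • K ∩ ray p).Nonempty

/-- `p ∈ ℝP¹` is a uniform conical limit point of `Γ'` if the ray ending at `p` is covered by
the translates of a single compact subset of `ℍ` by an injective sequence in `Γ'`. -/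
def IsUniformConicalLimitPoint (Γ' : Subgroup SL(2, ℝ)) (p : RP1) : Prop :=
  ∃ K : Set ℍ, IsCompact K ∧ ∃ γ : ℕ → SL(2, ℝ), Function.Injective γ ∧
    (∀ k, γ k ∈ Γ') ∧ ray p ⊆ ⋃ k, γ k • K

/-- The limit set of a subgroup of `SL(2, ℝ)`: the closure in `ℝP¹` of the set of fixed
points of hyperbolic elements of the subgroup. -/
def limitSet (Γ' : Subgroup SL(2, ℝ)) : Set RP1 :=
  closure {p : RP1 | ∃ g ∈ Γ', IsHyperbolic g ∧ sl2Act g p = p}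


/-- The coefficient `β` in the representation `z = α • 1 + β • A`. -/
def bval (A z : Matrix (Fin 2) (Fin 2) ℝ) : ℝ :=
  (2 * ((z * A) 0 0 + (z * A) 1 1) - (A 0 0 + A 1 1) * (z 0 0 + z 1 1)) /
    ((A 0 0 + A 1 1) ^ 2 - 4)

/-- The eigenvalue of `z` (commuting with `A`) on the `l`-eigenvector of `A`. -/
def fval (A : Matrix (Fin 2) (Fin 2) ℝ) (l : ℝ) (z : Matrix (Fin 2) (Fin 2) ℝ) : ℝ :=
  ((z 0 0 + z 1 1) - bval A z * (A 0 0 + A 1 1)) / 2 + bval A z * l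

lemma comm_rep' {A : Matrix (Fin 2) (Fin 2) ℝ}
    (hns : ¬(A 0 1 = 0 ∧ A 1 0 = 0 ∧ A 0 0 = A 1 1))
    {x : Matrix (Fin 2) (Fin 2) ℝ} (hx : x * A = A * x) :
    ∃ α β : ℝ, x = α • (1 : Matrix (Fin 2) (Fin 2) ℝ) + β • A := by
  have h00 := congrFun (congrFun hx 0) 0
  have h01 := congrFun (congrFun hx 0) 1
  have h10 := congrFun (congrFun hx 1) 0
  have h11 := congrFun (congrFun hx 1) 1
  simp [Matrix.mul_apply, Fin.sum_univ_two] at h00 h01 h10 h11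
  by_cases hq : A 0 1 = 0
  · by_cases hr : A 1 0 = 0
    · have hd : A 0 0 - A 1 1 ≠ 0 := fun h => hns ⟨hq, hr, by linarith [sub_eq_zero.mp h]⟩
      have hf : x 0 1 = 0 := by
        rcases mul_eq_zero.mp (show x 0 1 * (A 0 0 - A 1 1) = 0 by rw [hq] at h01; linarith)
          with h | h
        · exact h
        · exact absurd h hd
      have hg : x 1 0 = 0 := by
        rcases mul_eq_zero.mp (show x 1 0 * (A 0 0 - A 1 1) = 0 by rw [hr] at h10; linarith)
          with h | h
        · exact h
        · exact absurd h hd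
      refine ⟨x 0 0 - ((x 0 0 - x 1 1) / (A 0 0 - A 1 1)) * A 0 0,
        (x 0 0 - x 1 1) / (A 0 0 - A 1 1), ?_⟩
      ext i j
      fin_cases i <;> fin_cases j <;>
        simp [Matrix.one_apply, hq, hr, hf, hg] <;> field_simp <;> ring
    · have hf : x 0 1 = 0 := by
        rcases mul_eq_zero.mp (show x 0 1 * A 1 0 = 0 by rw [hq] at h00; linarith) with h | h
        · exact h
        · exact absurd h hr
      refine ⟨x 0 0 - (x 1 0 / A 1 0) * A 0 0, x 1 0 / A 1 0, ?_⟩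
      ext i j
      fin_cases i <;> fin_cases j <;>
        simp [Matrix.one_apply, hq, hf] <;> field_simp <;> linarith [h00, h01, h10, h11]
  · refine ⟨x 0 0 - (x 0 1 / A 0 1) * A 0 0, x 0 1 / A 0 1, ?_⟩
    ext i j
    fin_cases i <;> fin_cases j <;>
      simp [Matrix.one_apply] <;> field_simp <;> linarith [h00, h01, h10, h11]

lemma bval_rep {A : Matrix (Fin 2) (Fin 2) ℝ} (hA : A 0 0 * A 1 1 - A 0 1 * A 1 0 = 1)
    (hD : (A 0 0 + A 1 1) ^ 2 - 4 ≠ 0) (α β : ℝ) :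
    bval A (α • (1 : Matrix (Fin 2) (Fin 2) ℝ) + β • A) = β := by
  rw [bval, div_eq_iff hD]
  simp [Matrix.mul_apply, Fin.sum_univ_two, Matrix.add_apply, Matrix.smul_apply,
    Matrix.one_apply, smul_eq_mul]
  linear_combination (-4 * β) * hA

lemma fval_rep {A : Matrix (Fin 2) (Fin 2) ℝ} (hA : A 0 0 * A 1 1 - A 0 1 * A 1 0 = 1)
    (hD : (A 0 0 + A 1 1) ^ 2 - 4 ≠ 0) (l α β : ℝ) :
    fval A l (α • (1 : Matrix (Fin 2) (Fin 2) ℝ) + β • A) = α + β * l := by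
  rw [fval, bval_rep hA hD]
  simp [Matrix.add_apply, Matrix.smul_apply, Matrix.one_apply, smul_eq_mul]
  ring

lemma rep_mul {A : Matrix (Fin 2) (Fin 2) ℝ} (hA : A 0 0 * A 1 1 - A 0 1 * A 1 0 = 1)
    (α β α' β' : ℝ) :
    (α • (1 : Matrix (Fin 2) (Fin 2) ℝ) + β • A) * (α' • 1 + β' • A) =
      (α * α' - β * β') • 1 + (α * β' + α' * β + (A 0 0 + A 1 1) * β * β') • A := by
  ext i j
  fin_cases i <;> fin_cases j <;>
    simp [Matrix.mul_apply, Fin.sum_univ_two, Matrix.add_apply, Matrix.smul_apply,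
      Matrix.one_apply, smul_eq_mul] <;>
    first
      | ring1
      | linear_combination (β * β') * hA
      | linear_combination (-(β * β')) * hA

lemma rep_det {A : Matrix (Fin 2) (Fin 2) ℝ} (hA : A 0 0 * A 1 1 - A 0 1 * A 1 0 = 1)
    (α β : ℝ) :
    (α • (1 : Matrix (Fin 2) (Fin 2) ℝ) + β • A).det =
      α ^ 2 + α * β * (A 0 0 + A 1 1) + β ^ 2 := by
  rw [Matrix.det_fin_two]
  simp [Matrix.add_apply, Matrix.smul_apply, Matrix.one_apply, smul_eq_mul]
  linear_combination (β ^ 2) * hA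


/-- Two commuting non-identity elements of a discrete purely hyperbolic subgroup of
`SL(2, ℝ)` are integer powers of a common element of the subgroup. -/
theorem commute_exists_common_power
    (Γ : Subgroup SL(2, ℝ)) (hdisc : DiscreteTopology Γ) (hPH : PurelyHyperbolic Γ)
    (a b : SL(2, ℝ)) (ha : a ∈ Γ) (hb : b ∈ Γ) (ha1 : a ≠ 1) (hb1 : b ≠ 1)
    (hab : a * b = b * a) :
    ∃ c ∈ Γ, ∃ m n : ℤ, a = c ^ m ∧ b = c ^ n := by
  classical
  set A : Matrix (Fin 2) (Fin 2) ℝ := (a : Matrix (Fin 2) (Fin 2) ℝ) with hA_def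
  have hAdet : A 0 0 * A 1 1 - A 0 1 * A 1 0 = 1 := by
    have h := a.property
    rw [Matrix.det_fin_two] at h
    linarith
  have ht : 2 < |A 0 0 + A 1 1| := by
    have h := hPH a ha ha1
    rwa [_root_.IsHyperbolic, Matrix.trace_fin_two] at h
  set t : ℝ := A 0 0 + A 1 1 with ht_def
  have ht4 : 0 < t ^ 2 - 4 := by nlinarith [sq_abs t, abs_nonneg t]
  have hD : t ^ 2 - 4 ≠ 0 := ne_of_gt ht4
  set d : ℝ := Real.sqrt (t ^ 2 - 4) with hd_def
  have hd2 : d ^ 2 = t ^ 2 - 4 := Real.sq_sqrt ht4.le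
  have hd0 : 0 < d := Real.sqrt_pos.mpr ht4
  set l : ℝ := (t + d) / 2 with hl_def
  set m0 : ℝ := (t - d) / 2 with hm0_def
  have hsum : l + m0 = t := by rw [hl_def, hm0_def]; ring
  have hprod : l * m0 = 1 := by rw [hl_def, hm0_def]; linear_combination (-1/4 : ℝ) * hd2
  have hlm : l - m0 ≠ 0 := by
    have h : l - m0 = d := by rw [hl_def, hm0_def]; ring
    rw [h]; exact ne_of_gt hd0
  have hns : ¬(A 0 1 = 0 ∧ A 1 0 = 0 ∧ A 0 0 = A 1 1) := by
    rintro ⟨hq, hr, hps⟩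
    rw [hq, hr, hps] at hAdet
    have h2 : t = A 1 1 + A 1 1 := by rw [ht_def, hps]
    have habs : |t| = 2 := by
      rcases mul_eq_zero.mp (show (A 1 1 - 1) * (A 1 1 + 1) = 0 by nlinarith) with h | h
      · have : A 1 1 = 1 := by linarith
        rw [h2, this]; norm_num
      · have : A 1 1 = -1 := by linarith
        rw [h2, this]; norm_num
    rw [habs] at ht; linarith
  -- eigenvalue maps
  set F : Matrix.SpecialLinearGroup (Fin 2) ℝ → ℝ := fun z => fval A l z with hF_def
  set F2 : Matrix.SpecialLinearGroup (Fin 2) ℝ → ℝ := fun z => fval A m0 z with hF2_def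
  -- basic per-element facts
  have hFrep : ∀ z : Matrix.SpecialLinearGroup (Fin 2) ℝ, (α : ℝ) → (β : ℝ) →
      (z : Matrix (Fin 2) (Fin 2) ℝ) = α • 1 + β • A → F z = α + β * l := by
    intro z α β hz
    show fval A l (z : Matrix (Fin 2) (Fin 2) ℝ) = α + β * l
    rw [hz]; exact fval_rep hAdet hD l α β
  have hF2rep : ∀ z : Matrix.SpecialLinearGroup (Fin 2) ℝ, (α : ℝ) → (β : ℝ) →
      (z : Matrix (Fin 2) (Fin 2) ℝ) = α • 1 + β • A → F2 z = α + β * m0 := by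
    intro z α β hz
    show fval A m0 (z : Matrix (Fin 2) (Fin 2) ℝ) = α + β * m0
    rw [hz]; exact fval_rep hAdet hD m0 α β
  have hdet_rep : ∀ (α β : ℝ) (z : Matrix.SpecialLinearGroup (Fin 2) ℝ),
      (z : Matrix (Fin 2) (Fin 2) ℝ) = α • 1 + β • A →
      (α + β * l) * (α + β * m0) = 1 := by
    intro α β z hz
    have hdz : ((z : Matrix (Fin 2) (Fin 2) ℝ)).det = 1 := z.property
    rw [hz, rep_det hAdet] at hdz
    rw [← ht_def] at hdz
    linear_combination hdz + (α * β) * hsum + (β ^ 2) * hprod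
  have hFF2 : ∀ z : Matrix.SpecialLinearGroup (Fin 2) ℝ,
      (z : Matrix (Fin 2) (Fin 2) ℝ) * A = A * z → F z * F2 z = 1 := by
    intro z hz
    obtain ⟨α, β, hrep⟩ := comm_rep' hns hz
    rw [hFrep z α β hrep, hF2rep z α β hrep]
    exact hdet_rep α β z hrep
  have hF0 : ∀ z : Matrix.SpecialLinearGroup (Fin 2) ℝ,
      (z : Matrix (Fin 2) (Fin 2) ℝ) * A = A * z → F z ≠ 0 :=
    fun z hz => left_ne_zero_of_mul_eq_one (hFF2 z hz)
  have htr : ∀ z : Matrix.SpecialLinearGroup (Fin 2) ℝ,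
      (z : Matrix (Fin 2) (Fin 2) ℝ) * A = A * z →
      Matrix.trace (z : Matrix (Fin 2) (Fin 2) ℝ) = F z + F2 z := by
    intro z hz
    obtain ⟨α, β, hrep⟩ := comm_rep' hns hz
    rw [hFrep z α β hrep, hF2rep z α β hrep, Matrix.trace_fin_two, hrep]
    simp [Matrix.add_apply, Matrix.smul_apply, Matrix.one_apply, smul_eq_mul]
    linear_combination (-β) * hsum + (-β) * ht_def
  have hFone : F 1 = 1 := by
    have h1 : ((1 : Matrix.SpecialLinearGroup (Fin 2) ℝ) : Matrix (Fin 2) (Fin 2) ℝ)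
        = (1 : ℝ) • 1 + (0 : ℝ) • A := by simp
    rw [hFrep 1 1 0 h1]; ring
  have hF_eq_one : ∀ z : Matrix.SpecialLinearGroup (Fin 2) ℝ,
      (z : Matrix (Fin 2) (Fin 2) ℝ) * A = A * z → F z = 1 → z = 1 := by
    intro z hz h1
    obtain ⟨α, β, hrep⟩ := comm_rep' hns hz
    have hFl : α + β * l = 1 := by rw [← hFrep z α β hrep]; exact h1
    have hFm : α + β * m0 = 1 := by
      have := hdet_rep α β z hrep
      rw [hFl, one_mul] at this; exact this
    have hβ : β = 0 := by
      rcases mul_eq_zero.mp (show β * (l - m0) = 0 by linarith) with h | h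
      · exact h
      · exact absurd h hlm
    have hα : α = 1 := by rw [hβ] at hFl; linarith
    ext i j
    rw [hrep, hβ, hα]
    simp
  -- commutation is preserved by products and inverses
  have hmulcomm : ∀ z w : Matrix.SpecialLinearGroup (Fin 2) ℝ,
      (z : Matrix (Fin 2) (Fin 2) ℝ) * A = A * z → (w : Matrix (Fin 2) (Fin 2) ℝ) * A = A * w →
      ((z * w : Matrix.SpecialLinearGroup (Fin 2) ℝ) : Matrix (Fin 2) (Fin 2) ℝ) * A
        = A * (z * w : Matrix.SpecialLinearGroup (Fin 2) ℝ) := by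
    intro z w hz hw
    rw [Matrix.SpecialLinearGroup.coe_mul, mul_assoc, hw, ← mul_assoc, hz, mul_assoc]
  have hinvcomm : ∀ z : Matrix.SpecialLinearGroup (Fin 2) ℝ,
      (z : Matrix (Fin 2) (Fin 2) ℝ) * A = A * z →
      ((z⁻¹ : Matrix.SpecialLinearGroup (Fin 2) ℝ) : Matrix (Fin 2) (Fin 2) ℝ) * A
        = A * (z⁻¹ : Matrix.SpecialLinearGroup (Fin 2) ℝ) := by
    intro z hz
    have h1 : ((z⁻¹ : Matrix.SpecialLinearGroup (Fin 2) ℝ) : Matrix (Fin 2) (Fin 2) ℝ)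
        * (z : Matrix (Fin 2) (Fin 2) ℝ) = 1 := by
      rw [← Matrix.SpecialLinearGroup.coe_mul, inv_mul_cancel, Matrix.SpecialLinearGroup.coe_one]
    have h2 : (z : Matrix (Fin 2) (Fin 2) ℝ)
        * ((z⁻¹ : Matrix.SpecialLinearGroup (Fin 2) ℝ) : Matrix (Fin 2) (Fin 2) ℝ) = 1 := by
      rw [← Matrix.SpecialLinearGroup.coe_mul, mul_inv_cancel, Matrix.SpecialLinearGroup.coe_one]
    calc ((z⁻¹ : Matrix.SpecialLinearGroup (Fin 2) ℝ) : Matrix (Fin 2) (Fin 2) ℝ) * A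
        = ↑z⁻¹ * (A * (↑z * ↑z⁻¹)) := by rw [h2, mul_one]
      _ = ↑z⁻¹ * ((A * ↑z) * ↑z⁻¹) := by rw [mul_assoc]
      _ = ↑z⁻¹ * ((↑z * A) * ↑z⁻¹) := by rw [← hz]
      _ = (↑z⁻¹ * ↑z) * (A * ↑z⁻¹) := by rw [mul_assoc (↑z : Matrix (Fin 2) (Fin 2) ℝ) A, ← mul_assoc]
      _ = A * ↑z⁻¹ := by rw [h1, one_mul]
  have hFmul : ∀ z w : Matrix.SpecialLinearGroup (Fin 2) ℝ,
      (z : Matrix (Fin 2) (Fin 2) ℝ) * A = A * z → (w : Matrix (Fin 2) (Fin 2) ℝ) * A = A * w →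
      F (z * w) = F z * F w := by
    intro z w hz hw
    obtain ⟨α, β, hz'⟩ := comm_rep' hns hz
    obtain ⟨α', β', hw'⟩ := comm_rep' hns hw
    have hmul : ((z * w : Matrix.SpecialLinearGroup (Fin 2) ℝ) : Matrix (Fin 2) (Fin 2) ℝ)
        = (α * α' - β * β') • 1 + (α * β' + α' * β + (A 0 0 + A 1 1) * β * β') • A := by
      rw [Matrix.SpecialLinearGroup.coe_mul, hz', hw', rep_mul hAdet]
    rw [hFrep _ _ _ hmul, hFrep _ _ _ hz', hFrep _ _ _ hw']
    have hl2 : l ^ 2 = (A 0 0 + A 1 1) * l - 1 := by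
      rw [← ht_def]; linear_combination l * hsum - hprod
    linear_combination (-(β * β')) * hl2
  have hFinv : ∀ z : Matrix.SpecialLinearGroup (Fin 2) ℝ,
      (z : Matrix (Fin 2) (Fin 2) ℝ) * A = A * z → F z⁻¹ = (F z)⁻¹ := by
    intro z hz
    have h := hFmul z z⁻¹ hz (hinvcomm z hz)
    rw [mul_inv_cancel, hFone] at h
    exact eq_inv_of_mul_eq_one_right h.symm
  have hFpow : ∀ z : Matrix.SpecialLinearGroup (Fin 2) ℝ,
      (z : Matrix (Fin 2) (Fin 2) ℝ) * A = A * z → ∀ k : ℕ,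
      ((z ^ k : Matrix.SpecialLinearGroup (Fin 2) ℝ) : Matrix (Fin 2) (Fin 2) ℝ) * A
          = A * (z ^ k : Matrix.SpecialLinearGroup (Fin 2) ℝ) ∧ F (z ^ k) = (F z) ^ k := by
    intro z hz k
    induction k with
    | zero => simp [hFone]
    | succ k ih =>
      constructor
      · rw [pow_succ]; exact hmulcomm _ _ ih.1 hz
      · rw [pow_succ, hFmul _ _ ih.1 hz, ih.2, pow_succ]
  have hFzpow : ∀ z : Matrix.SpecialLinearGroup (Fin 2) ℝ,
      (z : Matrix (Fin 2) (Fin 2) ℝ) * A = A * z → ∀ m : ℤ,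
      ((z ^ m : Matrix.SpecialLinearGroup (Fin 2) ℝ) : Matrix (Fin 2) (Fin 2) ℝ) * A
          = A * (z ^ m : Matrix.SpecialLinearGroup (Fin 2) ℝ) ∧ F (z ^ m) = (F z) ^ m := by
    intro z hz m
    cases m with
    | ofNat k =>
      have h := hFpow z hz k
      constructor
      · rw [Int.ofNat_eq_coe, zpow_natCast]; exact h.1
      · rw [Int.ofNat_eq_coe, zpow_natCast, h.2, zpow_natCast]
    | negSucc k =>
      have h := hFpow z hz (k + 1)
      constructor
      · rw [zpow_negSucc]; exact hinvcomm _ h.1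
      · rw [zpow_negSucc, hFinv _ h.1, h.2, zpow_negSucc]
  have hFabs : ∀ z : Matrix.SpecialLinearGroup (Fin 2) ℝ, z ∈ Γ →
      (z : Matrix (Fin 2) (Fin 2) ℝ) * A = A * z → |F z| = 1 → F z = 1 := by
    intro z hzΓ hz habs
    rcases (abs_eq (by norm_num : (0:ℝ) ≤ 1)).mp habs with h | h
    · exact h
    · exfalso
      have hz1 : z ≠ 1 := by
        intro he; rw [he, hFone] at h; norm_num at h
      have hhyp := hPH z hzΓ hz1
      rw [_root_.IsHyperbolic] at hhyp
      have hF2z : F2 z = -1 := by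
        have := hFF2 z hz
        rw [h] at this; linarith
      rw [htr z hz, h, hF2z] at hhyp
      norm_num at hhyp
  -- commutation facts for a and b
  have haA : (a : Matrix (Fin 2) (Fin 2) ℝ) * A = A * a := by rw [← hA_def]
  have hbA : (b : Matrix (Fin 2) (Fin 2) ℝ) * A = A * b := by
    have h := congrArg (fun g : Matrix.SpecialLinearGroup (Fin 2) ℝ =>
      (g : Matrix (Fin 2) (Fin 2) ℝ)) hab
    simp only [Matrix.SpecialLinearGroup.coe_mul] at h
    exact h.symm
  -- the additive subgroup of logarithms
  set S : AddSubgroup ℝ :=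
    { carrier := {r : ℝ | ∃ z : Matrix.SpecialLinearGroup (Fin 2) ℝ,
        z ∈ Γ ∧ (z : Matrix (Fin 2) (Fin 2) ℝ) * A = A * z ∧ Real.log |F z| = r}
      zero_mem' := ⟨1, Γ.one_mem, by simp, by rw [hFone]; simp⟩
      add_mem' := by
        rintro r s ⟨z, hzΓ, hzc, hzr⟩ ⟨w, hwΓ, hwc, hwr⟩
        refine ⟨z * w, Γ.mul_mem hzΓ hwΓ, hmulcomm z w hzc hwc, ?_⟩
        rw [hFmul z w hzc hwc, abs_mul,
          Real.log_mul (abs_ne_zero.mpr (hF0 z hzc)) (abs_ne_zero.mpr (hF0 w hwc)), hzr, hwr]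
      neg_mem' := by
        rintro r ⟨z, hzΓ, hzc, hzr⟩
        exact ⟨z⁻¹, Γ.inv_mem hzΓ, hinvcomm z hzc,
          by rw [hFinv z hzc, abs_inv, Real.log_inv, hzr]⟩ } with hS_def
  have haS : Real.log |F a| ∈ S := ⟨a, ha, haA, rfl⟩
  have hbS : Real.log |F b| ∈ S := ⟨b, hb, hbA, rfl⟩
  rcases AddSubgroup.dense_or_cyclic S with hdense | ⟨x, hx⟩
  · -- dense case: contradiction with discreteness
    exfalso
    have hsel : ∀ k : ℕ, ∃ z : Matrix.SpecialLinearGroup (Fin 2) ℝ,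
        z ∈ Γ ∧ (z : Matrix (Fin 2) (Fin 2) ℝ) * A = A * z ∧
        Real.log |F z| ∈ Set.Ioo (0:ℝ) (1/(k+1)) := by
      intro k
      have hk1 : (0:ℝ) < (k:ℝ) + 1 := by positivity
      have hne : (Set.Ioo (0:ℝ) (1/((k:ℝ)+1))).Nonempty :=
        ⟨1/(2*((k:ℝ)+1)), by positivity, by rw [div_lt_div_iff₀ (by positivity) hk1]; nlinarith⟩
      obtain ⟨r, hrS, hrI⟩ := hdense.exists_mem_open isOpen_Ioo hne
      obtain ⟨z, hzΓ, hzc, hzr⟩ := hrS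
      exact ⟨z, hzΓ, hzc, by rw [hzr]; exact hrI⟩
    choose z hzΓ hzc hzr using hsel
    set w : ℕ → Matrix.SpecialLinearGroup (Fin 2) ℝ := fun k => z k * z k with hw_def
    have hwΓ : ∀ k, w k ∈ Γ := fun k => Γ.mul_mem (hzΓ k) (hzΓ k)
    have hwc : ∀ k, ((w k : Matrix.SpecialLinearGroup (Fin 2) ℝ) : Matrix (Fin 2) (Fin 2) ℝ)
        * A = A * (w k) := fun k => hmulcomm _ _ (hzc k) (hzc k)
    have hFw : ∀ k, F (w k) = |F (z k)| ^ 2 := by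
      intro k
      rw [hw_def]
      simp only
      rw [hFmul _ _ (hzc k) (hzc k), sq_abs]
      ring
    have hFwexp : ∀ k, F (w k) = Real.exp (2 * Real.log |F (z k)|) := by
      intro k
      rw [hFw k, two_mul, Real.exp_add,
        Real.exp_log (abs_pos.mpr (hF0 _ (hzc k)))]
      ring
    have hgpos : ∀ k, 1 < F (w k) := by
      intro k
      rw [hFwexp k]
      have := (hzr k).1
      calc (1:ℝ) = Real.exp 0 := by rw [Real.exp_zero]
        _ < Real.exp (2 * Real.log |F (z k)|) := Real.exp_lt_exp.mpr (by linarith)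
    have hgle : ∀ k, F (w k) ≤ Real.exp (2 * (1/((k:ℝ)+1))) := by
      intro k
      rw [hFwexp k]
      exact Real.exp_le_exp.mpr (by have := (hzr k).2; linarith)
    have hexp : Filter.Tendsto (fun k : ℕ => Real.exp (2 * (1/((k:ℝ)+1))))
        Filter.atTop (nhds 1) := by
      have h0 : Filter.Tendsto (fun k : ℕ => 2 * (1/((k:ℝ)+1))) Filter.atTop (nhds 0) := by
        have := tendsto_one_div_add_atTop_nhds_zero_nat (𝕜 := ℝ)
        have h2 := this.const_mul (2:ℝ)
        simpa using h2
      have := (Real.continuous_exp.tendsto 0).comp h0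
      simpa [Function.comp_def] using this
    have hgt : Filter.Tendsto (fun k => F (w k)) Filter.atTop (nhds 1) :=
      tendsto_of_tendsto_of_tendsto_of_le_of_le tendsto_const_nhds hexp
        (fun k => (hgpos k).le) hgle
    -- coefficient convergence
    have hrepw : ∀ k : ℕ, ∃ α β : ℝ,
        ((w k : Matrix.SpecialLinearGroup (Fin 2) ℝ) : Matrix (Fin 2) (Fin 2) ℝ)
          = α • 1 + β • A ∧ α + β * l = F (w k) ∧ α + β * m0 = (F (w k))⁻¹ := by
      intro k
      obtain ⟨α, β, hrep⟩ := comm_rep' hns (hwc k)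
      refine ⟨α, β, hrep, (hFrep _ _ _ hrep).symm, ?_⟩
      have hdet1 := hdet_rep α β (w k) hrep
      have hne : α + β * l ≠ 0 := left_ne_zero_of_mul_eq_one hdet1
      have hFval : F (w k) = α + β * l := hFrep _ _ _ hrep
      rw [hFval]
      field_simp
      linear_combination hdet1
    choose αs βs hrep hFl hFm using hrepw
    have hβform : ∀ k, βs k = (F (w k) - (F (w k))⁻¹) / (l - m0) := by
      intro k
      rw [eq_div_iff hlm]
      linear_combination (hFl k) - (hFm k)
    have hβt : Filter.Tendsto βs Filter.atTop (nhds 0) := by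
      have h1 : Filter.Tendsto (fun k => (F (w k) - (F (w k))⁻¹) / (l - m0))
          Filter.atTop (nhds (((1:ℝ) - 1⁻¹) / (l - m0))) :=
        (hgt.sub (hgt.inv₀ one_ne_zero)).div_const _
      have h2 : ((1:ℝ) - 1⁻¹) / (l - m0) = 0 := by norm_num
      rw [h2] at h1
      exact h1.congr fun k => (hβform k).symm
    have hαt : Filter.Tendsto αs Filter.atTop (nhds 1) := by
      have h1 : Filter.Tendsto (fun k => F (w k) - βs k * l) Filter.atTop
          (nhds (1 - 0 * l)) := hgt.sub (hβt.mul_const l)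
      have h2 : (1:ℝ) - 0 * l = 1 := by ring
      rw [h2] at h1
      exact h1.congr fun k => by linarith [hFl k]
    have hmt : Filter.Tendsto
        (fun k => ((w k : Matrix.SpecialLinearGroup (Fin 2) ℝ) : Matrix (Fin 2) (Fin 2) ℝ))
        Filter.atTop (nhds 1) := by
      have h1 : Filter.Tendsto (fun k => αs k • (1 : Matrix (Fin 2) (Fin 2) ℝ) + βs k • A)
          Filter.atTop (nhds ((1:ℝ) • (1 : Matrix (Fin 2) (Fin 2) ℝ) + (0:ℝ) • A)) :=
        (hαt.smul tendsto_const_nhds).add (hβt.smul tendsto_const_nhds)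
      rw [one_smul, zero_smul, add_zero] at h1
      exact h1.congr fun k => (hrep k).symm
    have hslt : Filter.Tendsto (fun k => w k) Filter.atTop
        (nhds (1 : Matrix.SpecialLinearGroup (Fin 2) ℝ)) := by
      apply tendsto_subtype_rng.mpr
      simpa using hmt
    have hΓt : Filter.Tendsto (fun k => (⟨w k, hwΓ k⟩ : Γ)) Filter.atTop
        (nhds (1 : Γ)) := by
      apply tendsto_subtype_rng.mpr
      simpa using hslt
    rw [discreteTopology_iff_nhds.mp hdisc 1, Filter.tendsto_pure] at hΓt
    obtain ⟨k, hk⟩ := hΓt.exists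
    have hwk : w k = 1 := by simpa using congrArg Subtype.val hk
    have := hgpos k
    rw [hwk, hFone] at this
    norm_num at this
  · -- cyclic case
    have hxS : x ∈ S := by rw [hx]; exact AddSubgroup.subset_closure (Set.mem_singleton x)
    obtain ⟨c, hcΓ, hcc, hcx⟩ := hxS
    rw [hx] at haS hbS
    obtain ⟨m, hm⟩ := AddSubgroup.mem_closure_singleton.mp haS
    obtain ⟨n, hn⟩ := AddSubgroup.mem_closure_singleton.mp hbS
    have main : ∀ z : Matrix.SpecialLinearGroup (Fin 2) ℝ, z ∈ Γ →
        (z : Matrix (Fin 2) (Fin 2) ℝ) * A = A * z → ∀ k : ℤ,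
        (k • x = Real.log |F z|) → z = c ^ k := by
      intro z hzΓ hzc k hk
      have hck := hFzpow c hcc k
      have hckΓ : c ^ k ∈ Γ := Γ.zpow_mem hcΓ k
      have h1 : Real.log |F (c ^ k)| = k • x := by
        rw [hck.2, Real.log_abs, Real.log_zpow, ← Real.log_abs (F c), hcx, zsmul_eq_mul]
      have h2 : |F z| = |F (c ^ k)| := by
        rw [← Real.exp_log (abs_pos.mpr (hF0 z hzc)),
          ← Real.exp_log (abs_pos.mpr (hF0 _ hck.1)), ← hk, h1]
      have hwc : ((z * (c ^ k)⁻¹ : Matrix.SpecialLinearGroup (Fin 2) ℝ)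
          : Matrix (Fin 2) (Fin 2) ℝ) * A = A * (z * (c ^ k)⁻¹) :=
        hmulcomm _ _ hzc (hinvcomm _ hck.1)
      have hwΓ : z * (c ^ k)⁻¹ ∈ Γ := Γ.mul_mem hzΓ (Γ.inv_mem hckΓ)
      have hFw : F (z * (c ^ k)⁻¹) = F z * (F (c ^ k))⁻¹ := by
        rw [hFmul _ _ hzc (hinvcomm _ hck.1), hFinv _ hck.1]
      have habs : |F (z * (c ^ k)⁻¹)| = 1 := by
        rw [hFw, abs_mul, abs_inv, ← h2,
          mul_inv_cancel₀ (abs_ne_zero.mpr (hF0 z hzc))]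
      have hone := hF_eq_one _ hwc (hFabs _ hwΓ hwc habs)
      exact (mul_inv_eq_one.mp hone)
    exact ⟨c, hcΓ, m, n, main a ha haA m hm, main b hb hbA n hn⟩


end
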